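/- Let λ ∈ [2, 4cos 50°). Define A(λ) = (λ/4)·(3 sin(arccos(λ/4)) − (λ/4)·tan(90° − arccos(λ/4))) + 4/√3. Then for all λ ∈ [2.1, 2.2], A(λ) ≥ 3.479, and 3.479 ≥ 1.004 · 2√3. -/

import Mathlib

open Real

/-- The explicit Voronoi-cell area lower bound
A(λ) = (λ/4)(3 sin(arccos(λ/4)) − (λ/4) tan(90° − arccos(λ/4))) + 4/√3 satisfies
A(λ) ≥ 3.479 for all λ ∈ [2.1, 2.2], and 3.479 ≥ 1.004 · 2√3. -/
theorem stmt_16 :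
    (∀ lam ∈ Set.Icc (2.1 : ℝ) 2.2,
      3.479 ≤ (lam / 4) * (3 * Real.sin (Real.arccos (lam / 4)) -
          (lam / 4) * Real.tan (π / 2 - Real.arccos (lam / 4))) + 4 / Real.sqrt 3) ∧
    1.004 * (2 * Real.sqrt 3) ≤ 3.479 := by
  have hr : (0:ℝ) < Real.sqrt 3 := Real.sqrt_pos.mpr (by norm_num)
  have hr2 : (Real.sqrt 3)^2 = 3 := Real.sq_sqrt (by norm_num)
  have hrub : Real.sqrt 3 ≤ 1.7320509 := by
    nlinarith [hr2, sq_nonneg (Real.sqrt 3 - 1.7320509)]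
  constructor
  · intro lam hlam
    obtain ⟨h1, h2⟩ := hlam
    have ht1 : (0.525:ℝ) ≤ lam/4 := by linarith
    have ht2 : lam/4 ≤ 0.55 := by linarith
    set t := lam / 4 with ht
    have ht0 : (0:ℝ) < t := by linarith
    have hs : (0:ℝ) < Real.sqrt (1 - t^2) := Real.sqrt_pos.mpr (by nlinarith)
    have hs2 : (Real.sqrt (1 - t^2))^2 = 1 - t^2 := Real.sq_sqrt (by nlinarith)
    rw [Real.sin_arccos, Real.tan_pi_div_two_sub, Real.tan_arccos]
    set s := Real.sqrt (1 - t^2) with hsdef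
    have h43 : (2.3094:ℝ) ≤ 4 / Real.sqrt 3 := by
      rw [le_div_iff₀ hr]; nlinarith
    have hexpand : t * (3 * s - t * (s / t)⁻¹) * s = t * (3 - 4*t^2) := by
      rw [inv_div]
      have e2 : 3*s - t*(t/s) = (3*s^2 - t^2)/s := by field_simp
      rw [e2, mul_assoc, div_mul_cancel₀ _ hs.ne']
      linear_combination 3*t*hs2
    have hP : (0:ℝ) < t * (3 - 4*t^2) := by nlinarith
    have hsq : (1.1696 * s)^2 ≤ (t * (3 - 4*t^2))^2 := by
      rw [mul_pow, hs2]
      nlinarith [mul_nonneg (sub_nonneg.mpr ht1) (sub_nonneg.mpr ht2),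
        sq_nonneg (t - 0.525), sq_nonneg (t - 0.55), sq_nonneg (t*t - 0.29)]
    have hkey : 1.1696 * s ≤ t * (3 - 4*t^2) := by
      nlinarith [hsq, hP, hs]
    have hmain : (1.1696:ℝ) ≤ t * (3 * s - t * (s / t)⁻¹) := by
      rw [← mul_le_mul_iff_of_pos_right hs, hexpand]
      exact hkey
    linarith
  · nlinarith [hrub, hr]
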